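/- For any ∅ ≠ F ⊆ 2^[n], the vectors ζ^{(F,T)} ∈ {0,1}^F for T ∈ {∅} ∪ F are affinely independent; consequently the correlation polytope ρ^(F) = conv{ζ^{(F,T)} : T ⊆ [n]} is full-dimensional in ℚ^F. -/

import Mathlib

open scoped Classical

lemma key_li (n : ℕ) (F : Finset (Finset (Fin n))) :
    LinearIndependent ℚ (fun T : {T : Finset (Fin n) // T ∈ F} =>
      (fun S : {S // S ∈ F} => if S.1 ⊆ T.1 then (1 : ℚ) else 0)) := by
  rw [linearIndependent_iff']
  intro s g hsum
  by_contra h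
  push_neg at h
  obtain ⟨i0, hi0s, hi0⟩ := h
  set t := s.filter (fun i => g i ≠ 0) with ht
  have htne : t.Nonempty := ⟨i0, Finset.mem_filter.2 ⟨hi0s, hi0⟩⟩
  obtain ⟨m, hmt, hmax⟩ := Finset.exists_max_image t (fun i => i.1.card) htne
  have hmg : g m ≠ 0 := (Finset.mem_filter.1 hmt).2
  have hms : m ∈ s := (Finset.mem_filter.1 hmt).1
  have := congrFun hsum ⟨m.1, m.2⟩
  simp only [Finset.sum_apply, Pi.smul_apply, smul_eq_mul, Pi.zero_apply] at this
  rw [Finset.sum_eq_single m] at this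
  · simp at this; exact hmg this
  · intro i his hne
    by_cases hgi : g i = 0
    · simp [hgi]
    · have hit : i ∈ t := Finset.mem_filter.2 ⟨his, hgi⟩
      have hcard := hmax i hit
      by_cases hsub : m.1 ⊆ i.1
      · exact absurd (Subtype.ext (Finset.eq_of_subset_of_card_le hsub hcard).symm) hne
      · simp [hsub]
  · intro hms'; exact absurd hms hms'

theorem stmt9 (n : ℕ) (F : Finset (Finset (Fin n))) (hF : F.Nonempty) (hFne : ∅ ∉ F) :
    AffineIndependent ℚ (fun T : {T : Finset (Fin n) // T = ∅ ∨ T ∈ F} =>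
      (fun S : {S // S ∈ F} => if S.1 ⊆ T.1 then (1 : ℚ) else 0)) ∧
    affineSpan ℚ (convexHull ℚ {z : {S // S ∈ F} → ℚ |
      ∃ T : Finset (Fin n), z = fun S => if S.1 ⊆ T then 1 else 0}) = ⊤ := by
  set i0 : {T : Finset (Fin n) // T = ∅ ∨ T ∈ F} := ⟨∅, Or.inl rfl⟩ with hi0
  have hzero : ∀ S : {S // S ∈ F}, (if S.1 ⊆ (∅ : Finset (Fin n)) then (1:ℚ) else 0) = 0 := by
    intro S
    have : ¬ S.1 ⊆ ∅ := by
      intro h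
      exact hFne (Finset.subset_empty.1 h ▸ S.2)
    simp [this]
  have hAI : AffineIndependent ℚ (fun T : {T : Finset (Fin n) // T = ∅ ∨ T ∈ F} =>
      (fun S : {S // S ∈ F} => if S.1 ⊆ T.1 then (1 : ℚ) else 0)) := by
    rw [affineIndependent_iff_linearIndependent_vsub ℚ _ i0]
    set e : {x : {T : Finset (Fin n) // T = ∅ ∨ T ∈ F} // x ≠ i0} → {T : Finset (Fin n) // T ∈ F} :=
      fun x => ⟨x.1.1, x.1.2.resolve_left (fun h => x.2 (Subtype.ext h))⟩ with he
    have einj : Function.Injective e := by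
      intro a b hab
      have h2 := Subtype.ext_iff.1 hab
      simp only [he] at h2
      exact Subtype.ext (Subtype.ext h2)
    have := (key_li n F).comp e einj
    convert this using 1
    funext x
    funext S
    simp only [vsub_eq_sub, Pi.sub_apply, hi0, hzero, sub_zero, he, Function.comp]
    all_goals rfl
  refine ⟨hAI, ?_⟩
  rw [affineSpan_convexHull]
  have hsub : Set.range (fun T : {T : Finset (Fin n) // T = ∅ ∨ T ∈ F} =>
      (fun S : {S // S ∈ F} => if S.1 ⊆ T.1 then (1 : ℚ) else 0)) ⊆
      {z : {S // S ∈ F} → ℚ | ∃ T : Finset (Fin n), z = fun S => if S.1 ⊆ T then 1 else 0} := by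
    rintro z ⟨T, rfl⟩
    exact ⟨T.1, rfl⟩
  have hcard : Fintype.card {T : Finset (Fin n) // T = ∅ ∨ T ∈ F} =
      Module.finrank ℚ ({S // S ∈ F} → ℚ) + 1 := by
    have h1 : Fintype.card {T : Finset (Fin n) // T = ∅ ∨ T ∈ F} =
        (insert ∅ F).card := by
      rw [← Fintype.card_coe]
      apply Fintype.card_congr
      exact Equiv.subtypeEquivRight (by intro x; simp [or_comm])
    rw [h1, Finset.card_insert_of_notMem hFne]
    rw [Module.finrank_pi, Fintype.card_coe]
  have htop := hAI.affineSpan_eq_top_iff_card_eq_finrank_add_one.2 hcard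
  exact top_le_iff.1 (htop ▸ affineSpan_mono ℚ hsub)
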